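/- For every p ∈ [1,∞] and every q ∈ [1,∞), the map sending a persistence diagram to its persistence landscape is not Hölder continuous from (persistence diagrams, W_p) to (landscapes, L^q): for all constants C > 0 and α > 0 there exist persistence diagrams X and Y such that ‖λ_X − λ_Y‖_q > C · W_p(X,Y)^α. -/

import Mathlib

open scoped ENNReal

noncomputable section

/-- The ℓ^p norm on ℝ², for `p ∈ [1, ∞]`. -/
def lpNorm2 (p : ℝ≥0∞) (z : ℝ × ℝ) : ℝ :=
  if p = ∞ then max |z.1| |z.2|
  else (|z.1| ^ p.toReal + |z.2| ^ p.toReal) ^ (1 / p.toReal)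

/-- The ℓ^p distance from a point of ℝ² to the diagonal `Δ = {(t,t)}`. -/
def diagDist (p : ℝ≥0∞) (z : ℝ × ℝ) : ℝ :=
  ⨅ t : ℝ, lpNorm2 p (z.1 - t, z.2 - t)

/-- A persistence diagram: a finite multiset of points `(b, d)` of ℝ² with `b < d`. -/
def IsDiagram (X : Multiset (ℝ × ℝ)) : Prop :=
  ∀ z ∈ X, z.1 < z.2

/-- A matching between two diagrams `X` and `Y`: some points of `X` are paired bijectively
with points of `Y`, and every remaining point of `X` or `Y` is left unmatched (assigned to
the diagonal). -/
structure Matching (X Y : Multiset (ℝ × ℝ)) where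
  pairs : Multiset ((ℝ × ℝ) × (ℝ × ℝ))
  unmatchedX : Multiset (ℝ × ℝ)
  unmatchedY : Multiset (ℝ × ℝ)
  fst_eq : pairs.map Prod.fst + unmatchedX = X
  snd_eq : pairs.map Prod.snd + unmatchedY = Y

/-- The ℓ^p displacement of a matched pair. -/
def pairDisp (p : ℝ≥0∞) (c : (ℝ × ℝ) × (ℝ × ℝ)) : ℝ :=
  lpNorm2 p (c.1.1 - c.2.1, c.1.2 - c.2.2)

/-- The `p`-cost of a matching: for `p < ∞` it is
`(∑_{matched pairs} ‖x − y‖_p^p + ∑_{unmatched z} dist_p(z,Δ)^p)^{1/p}`; for `p = ∞` it is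
the maximum displacement (over matched pairs and unmatched points). -/
def Matching.cost (p : ℝ≥0∞) {X Y : Multiset (ℝ × ℝ)} (M : Matching X Y) : ℝ :=
  if p = ∞ then
    sSup (insert (0 : ℝ)
      {r : ℝ | r ∈ M.pairs.map (pairDisp ∞) + (M.unmatchedX + M.unmatchedY).map (diagDist ∞)})
  else
    ((M.pairs.map fun c => pairDisp p c ^ p.toReal).sum +
      ((M.unmatchedX + M.unmatchedY).map fun z => diagDist p z ^ p.toReal).sum) ^ (1 / p.toReal)

/-- The `p`-Wasserstein distance between two persistence diagrams (bottleneck distance for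
`p = ∞`): the infimum of the `p`-cost over all matchings. -/
def wassersteinDist (p : ℝ≥0∞) (X Y : Multiset (ℝ × ℝ)) : ℝ :=
  sInf {c : ℝ | ∃ M : Matching X Y, c = M.cost p}

end

open MeasureTheory

/-- The persistence landscape of a diagram `X`: `λ_X(k,t)` is the `k`-th largest element of
the multiset `{max(0, min(t − b, d − t)) : (b,d) ∈ X}` (and `0` if `X` has fewer than `k`
points).  Here the values are sorted in decreasing order and the `k`-th one is taken. -/
noncomputable def landscape (X : Multiset (ℝ × ℝ)) (k : ℕ) (t : ℝ) : ℝ :=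
  (((X.map fun z => max 0 (min (t - z.1) (z.2 - t))).sort (· ≤ ·)).reverse.getD (k - 1) 0)

/-- The `L^q` distance between the persistence landscapes of two diagrams:
`‖λ_X − λ_Y‖_q = (∑_{k ≥ 1} ∫_ℝ |λ_X(k,t) − λ_Y(k,t)|^q dt)^{1/q}`. -/
noncomputable def landscapeDist (q : ℝ) (X Y : Multiset (ℝ × ℝ)) : ℝ :=
  (∑' k : ℕ, ∫ t : ℝ, |landscape X (k + 1) t - landscape Y (k + 1) t| ^ q) ^ (1 / q)


section AuxNotHolder

noncomputable def myMatching (A : ℝ) : Matching {((0:ℝ), A)} {((1:ℝ), A)} :=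
  ⟨{(((0:ℝ),A),((1:ℝ),A))}, 0, 0, by simp, by simp⟩

lemma lpNorm2_nonneg (p : ℝ≥0∞) (z : ℝ × ℝ) : 0 ≤ lpNorm2 p z := by
  unfold lpNorm2; split
  · exact le_max_of_le_left (abs_nonneg _)
  · exact Real.rpow_nonneg (by positivity) _

lemma diagDist_nonneg (p : ℝ≥0∞) (z : ℝ × ℝ) : 0 ≤ diagDist p z :=
  Real.iInf_nonneg fun t => lpNorm2_nonneg p _

lemma cost_nonneg (p : ℝ≥0∞) {X Y : Multiset (ℝ × ℝ)} (M : Matching X Y) :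
    0 ≤ M.cost p := by
  unfold Matching.cost; split
  · by_cases hb : BddAbove (insert (0:ℝ)
      {r : ℝ | r ∈ M.pairs.map (pairDisp ∞) + (M.unmatchedX + M.unmatchedY).map (diagDist ∞)})
    · exact le_csSup hb (Set.mem_insert _ _)
    · rw [Real.sSup_of_not_bddAbove hb]
  · refine Real.rpow_nonneg (add_nonneg (Multiset.sum_nonneg ?_) (Multiset.sum_nonneg ?_)) _
    · intro x hx
      obtain ⟨c, _, rfl⟩ := Multiset.mem_map.1 hx
      exact Real.rpow_nonneg (lpNorm2_nonneg _ _) _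
    · intro x hx
      obtain ⟨c, _, rfl⟩ := Multiset.mem_map.1 hx
      exact Real.rpow_nonneg (diagDist_nonneg _ _) _

lemma myMatching_cost (p : ℝ≥0∞) (hp : 1 ≤ p) (A : ℝ) : (myMatching A).cost p = 1 := by
  by_cases hpi : p = ∞
  · subst hpi
    have h1 : pairDisp ∞ (((0:ℝ),A),((1:ℝ),A)) = 1 := by
      simp [pairDisp, lpNorm2]
    rw [Matching.cost, if_pos rfl]
    have hset : {r : ℝ | r ∈ (myMatching A).pairs.map (pairDisp ∞) +
        (((myMatching A).unmatchedX + (myMatching A).unmatchedY)).map (diagDist ∞)} =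
        ({1} : Set ℝ) := by
      ext r; simp [myMatching, h1]
    rw [hset, show insert (0:ℝ) ({1} : Set ℝ) = {0, 1} from rfl, csSup_pair]
    simp
  · have hp0 : p ≠ 0 := by
      intro h; rw [h] at hp; exact absurd hp (by simp)
    have hpt : 0 < p.toReal := ENNReal.toReal_pos hp0 hpi
    have hd : pairDisp p (((0:ℝ),A),((1:ℝ),A)) = 1 := by
      simp [pairDisp, lpNorm2, hpi, Real.zero_rpow hpt.ne', Real.one_rpow]
    rw [Matching.cost, if_neg hpi]
    simp [myMatching, hd, Real.one_rpow]

lemma landscape_single (z : ℝ × ℝ) (t : ℝ) :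
    landscape {z} 1 t = max 0 (min (t - z.1) (z.2 - t)) := by
  simp [landscape, Multiset.sort_singleton]

lemma landscape_single_high (z : ℝ × ℝ) (k : ℕ) (t : ℝ) :
    landscape {z} (k + 2) t = 0 := by
  simp [landscape, Multiset.sort_singleton]

end AuxNotHolder

/-- For every `p ∈ [1,∞]` and `q ∈ [1,∞)`, the persistence landscape map
is not Hölder continuous from `(diagrams, W_p)` to `(landscapes, L^q)`: for all `C > 0` and
`α > 0` there are persistence diagrams `X`, `Y` with
`‖λ_X − λ_Y‖_q > C · W_p(X,Y)^α`. -/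
theorem landscapes_not_holder
    (p : ℝ≥0∞) (hp : 1 ≤ p) (q : ℝ) (hq : 1 ≤ q)
    (C α : ℝ) (hC : 0 < C) (hα : 0 < α) :
    ∃ X Y : Multiset (ℝ × ℝ), IsDiagram X ∧ IsDiagram Y ∧
      C * wassersteinDist p X Y ^ α < landscapeDist q X Y := by
  have hq0 : (0:ℝ) < q := lt_of_lt_of_le one_pos hq
  have hqne : q ≠ 0 := ne_of_gt hq0
  have hCq : (0:ℝ) < C ^ q := Real.rpow_pos_of_pos hC q
  set A : ℝ := 2 * C ^ q + 4 with hAdef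
  have hA4 : (4:ℝ) ≤ A := by nlinarith
  refine ⟨{((0:ℝ), A)}, {((1:ℝ), A)}, ?_, ?_, ?_⟩
  · intro z hz; rw [Multiset.mem_singleton] at hz; subst hz; dsimp; linarith
  · intro z hz; rw [Multiset.mem_singleton] at hz; subst hz; dsimp; linarith
  -- Wasserstein bound
  have hW0 : 0 ≤ wassersteinDist p {((0:ℝ), A)} {((1:ℝ), A)} := by
    apply Real.sInf_nonneg
    rintro c ⟨M, rfl⟩
    exact cost_nonneg p M
  have hW1 : wassersteinDist p {((0:ℝ), A)} {((1:ℝ), A)} ≤ 1 := by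
    apply csInf_le
    · exact ⟨0, by rintro c ⟨M, rfl⟩; exact cost_nonneg p M⟩
    · exact ⟨myMatching A, (myMatching_cost p hp A).symm⟩
  -- the landscape function difference
  set h : ℝ → ℝ := fun t => |max 0 (min (t - 0) (A - t)) - max 0 (min (t - 1) (A - t))| ^ q
    with hhdef
  have hch : Continuous h := by
    apply Continuous.rpow_const
    · apply continuous_abs.comp
      apply Continuous.sub
      · exact continuous_const.max ((continuous_id.sub continuous_const).min
          (continuous_const.sub continuous_id))
      · exact continuous_const.max ((continuous_id.sub continuous_const).min
          (continuous_const.sub continuous_id))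
    · exact fun x => Or.inr hq0.le
  have hsupp : ∀ t : ℝ, t ∉ Set.Icc (0:ℝ) A → h t = 0 := by
    intro t ht
    rw [Set.mem_Icc, not_and_or] at ht
    have hF : max 0 (min (t - 0) (A - t)) = 0 := by
      rcases ht with hlt | hlt <;> push_neg at hlt <;>
        [exact max_eq_left ((min_le_left _ _).trans (by linarith));
         exact max_eq_left ((min_le_right _ _).trans (by linarith))]
    have hG : max 0 (min (t - 1) (A - t)) = 0 := by
      rcases ht with hlt | hlt <;> push_neg at hlt <;>
        [exact max_eq_left ((min_le_left _ _).trans (by linarith));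
         exact max_eq_left ((min_le_right _ _).trans (by linarith))]
    rw [hhdef]
    dsimp only
    rw [hF, hG, sub_zero, abs_zero, Real.zero_rpow hqne]
  have hcs : HasCompactSupport h := HasCompactSupport.intro isCompact_Icc hsupp
  have hint : Integrable h := hch.integrable_of_hasCompactSupport hcs
  have hone : ∀ t ∈ Set.Icc (1:ℝ) (A/2), (1:ℝ) ≤ h t := by
    intro t ht
    obtain ⟨ht1, ht2⟩ := ht
    have hF : max 0 (min (t - 0) (A - t)) = t := by
      rw [sub_zero, min_eq_left (by linarith), max_eq_right (by linarith)]
    have hG : max 0 (min (t - 1) (A - t)) = t - 1 := by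
      rw [min_eq_left (by linarith), max_eq_right (by linarith)]
    have : h t = 1 := by
      rw [hhdef]
      dsimp only
      rw [hF, hG, show t - (t - 1) = 1 by ring, abs_one, Real.one_rpow]
    rw [this]
  have hvol : (volume (Set.Icc (1:ℝ) (A/2))).toReal = A/2 - 1 := by
    rw [Real.volume_Icc, ENNReal.toReal_ofReal (by linarith)]
  have hlow : 1 * (A/2 - 1) ≤ ∫ t in Set.Icc (1:ℝ) (A/2), h t := by
    have := MeasureTheory.setIntegral_ge_of_const_le measurableSet_Icc
      (by rw [Real.volume_Icc]; exact ENNReal.ofReal_ne_top) hone hint.integrableOn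
    rw [measureReal_def, hvol, smul_eq_mul, mul_one] at this
    linarith
  have hmono : ∫ t in Set.Icc (1:ℝ) (A/2), h t ≤ ∫ t, h t := by
    apply MeasureTheory.setIntegral_le_integral hint
    filter_upwards with t
    rw [hhdef]
    positivity
  have hgt : C ^ q < ∫ t, h t := by
    have : A/2 - 1 = C ^ q + 1 := by rw [hAdef]; ring
    nlinarith
  -- identify the landscape distance
  have hland : landscapeDist q {((0:ℝ), A)} {((1:ℝ), A)} = (∫ t, h t) ^ (1/q) := by
    unfold landscapeDist
    congr 1
    rw [tsum_eq_single 0]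
    · simp only [Nat.zero_add]
      congr 1
      funext t
      rw [landscape_single, landscape_single, hhdef]
    · intro k hk
      obtain ⟨m, rfl⟩ := Nat.exists_eq_succ_of_ne_zero hk
      have hz : ∀ t : ℝ, |landscape {((0:ℝ), A)} (m + 1 + 1) t -
          landscape {((1:ℝ), A)} (m + 1 + 1) t| ^ q = 0 := by
        intro t
        rw [show m + 1 + 1 = m + 2 from rfl, landscape_single_high, landscape_single_high,
          sub_zero, abs_zero, Real.zero_rpow hqne]
      simp only [hz, MeasureTheory.integral_zero]
  have hCeq : (C ^ q) ^ (1/q) = C := by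
    rw [← Real.rpow_mul hC.le, mul_one_div, div_self hqne, Real.rpow_one]
  calc C * wassersteinDist p {((0:ℝ), A)} {((1:ℝ), A)} ^ α
      ≤ C * 1 := by
        have := Real.rpow_le_one hW0 hW1 hα.le
        exact mul_le_mul_of_nonneg_left this hC.le
    _ = C := mul_one C
    _ = (C ^ q) ^ (1/q) := hCeq.symm
    _ < (∫ t, h t) ^ (1/q) := Real.rpow_lt_rpow hCq.le hgt (by positivity)
    _ = landscapeDist q {((0:ℝ), A)} {((1:ℝ), A)} := hland.symm
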